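/- A 2×2 block operator matrix [[a, b*], [b, c]] acting on H ⊕ K (with a ∈ B(H), c ∈ B(K) positive, b ∈ B(H,K)) is positive if and only if there exists a contraction v ∈ B(H, K) with b = c^{1/2} v a^{1/2}. -/

import Mathlib

noncomputable section

variable (E F : Type*)
  [NormedAddCommGroup E] [InnerProductSpace ℂ E] [CompleteSpace E]
  [NormedAddCommGroup F] [InnerProductSpace ℂ F] [CompleteSpace F]

def fstW : WithLp 2 (E × F) →L[ℂ] E :=
  (ContinuousLinearMap.fst ℂ E F).comp
    (WithLp.prodContinuousLinearEquiv 2 ℂ E F).toContinuousLinearMap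

def sndW : WithLp 2 (E × F) →L[ℂ] F :=
  (ContinuousLinearMap.snd ℂ E F).comp
    (WithLp.prodContinuousLinearEquiv 2 ℂ E F).toContinuousLinearMap

def inlW : E →L[ℂ] WithLp 2 (E × F) :=
  ((WithLp.prodContinuousLinearEquiv 2 ℂ E F).symm.toContinuousLinearMap).comp
    (ContinuousLinearMap.inl ℂ E F)

def inrW : F →L[ℂ] WithLp 2 (E × F) :=
  ((WithLp.prodContinuousLinearEquiv 2 ℂ E F).symm.toContinuousLinearMap).comp
    (ContinuousLinearMap.inr ℂ E F)

/-- The `2 × 2` block operator `[[a, b'], [b, c]]` on the Hilbert direct sum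
`H ⊕ K` (top-left `a : H → H`, top-right `b' : K → H`, bottom-left
`b : H → K`, bottom-right `c : K → K`). -/
def blockW (a : E →L[ℂ] E) (b' : F →L[ℂ] E) (b : E →L[ℂ] F) (c : F →L[ℂ] F) :
    WithLp 2 (E × F) →L[ℂ] WithLp 2 (E × F) :=
  (inlW E F) ∘L a ∘L (fstW E F) + (inlW E F) ∘L b' ∘L (sndW E F) +
    (inrW E F) ∘L b ∘L (fstW E F) + (inrW E F) ∘L c ∘L (sndW E F)

open scoped InnerProductSpace ComplexOrder NNReal
open ContinuousLinearMap

variable {E F}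

set_option linter.unusedSectionVars false

/-- Douglas-type factorization lemma: if `‖f ξ‖ ≤ ‖d ξ‖` for all `ξ`, then `f`
factors as `u ∘ d` with `‖u‖ ≤ 1` and `u` vanishing on `(range d)ᗮ`. -/
lemma aux_douglas {X Y : Type*}
    [NormedAddCommGroup X] [InnerProductSpace ℂ X] [CompleteSpace X]
    [NormedAddCommGroup Y] [InnerProductSpace ℂ Y] [CompleteSpace Y]
    (f : X →L[ℂ] Y) (d : X →L[ℂ] X) (h : ∀ ξ, ‖f ξ‖ ≤ ‖d ξ‖) :
    ∃ u : X →L[ℂ] Y, ‖u‖ ≤ 1 ∧ u ∘L d = f ∧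
      ∀ ζ ∈ (LinearMap.range (d : X →ₗ[ℂ] X))ᗮ, u ζ = 0 := by
  classical
  set D : Submodule ℂ X := LinearMap.range (d : X →ₗ[ℂ] X) with hD
  have key : ∀ ξ ξ' : X, d ξ = d ξ' → f ξ = f ξ' := by
    intro ξ ξ' hxx
    have h1 : ‖f ξ - f ξ'‖ ≤ ‖d ξ - d ξ'‖ := by
      rw [← map_sub, ← map_sub]; exact h _
    rw [hxx, sub_self, norm_zero] at h1
    have h2 := le_antisymm h1 (norm_nonneg _)
    rwa [norm_eq_zero, sub_eq_zero] at h2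
  have sel0 : ∀ y : D, ∃ ξ : X, d ξ = y := fun y => y.2
  choose sel hsel using sel0
  have gkey : ∀ (y : D) (ξ : X), d ξ = (y : X) → f ξ = f (sel y) := fun y ξ hy =>
    key _ _ (hy.trans (hsel y).symm)
  let g : D →ₗ[ℂ] Y :=
    { toFun := fun y => f (sel y)
      map_add' := by
        intro y z
        show f (sel (y + z)) = f (sel y) + f (sel z)
        rw [← gkey (y + z) (sel y + sel z) (by rw [map_add, hsel, hsel]; rfl), map_add]
      map_smul' := by
        intro m y
        show f (sel (m • y)) = (RingHom.id ℂ) m • f (sel y)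
        rw [← gkey (m • y) (m • sel y) (by rw [map_smul, hsel]; rfl), map_smul]
        rfl }
  have gbound : ∀ y : D, ‖g y‖ ≤ 1 * ‖y‖ := by
    intro y
    have h1 : ‖f (sel y)‖ ≤ ‖d (sel y)‖ := h _
    rw [hsel y] at h1
    rw [one_mul]; exact h1
  let gc : D →L[ℂ] Y := LinearMap.mkContinuous g 1 gbound
  have hgc : ‖gc‖ ≤ 1 := LinearMap.mkContinuous_norm_le g zero_le_one gbound
  set Dc := D.topologicalClosure with hDc
  haveI : CompleteSpace Dc := (Submodule.isClosed_topologicalClosure D).completeSpace_coe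
  let eL : D →ₗ[ℂ] Dc := Submodule.inclusion D.le_topologicalClosure
  have eLnorm : ∀ x : D, ‖eL x‖ ≤ 1 * ‖x‖ := fun x => by
    simp only [one_mul]; rfl
  let e : D →L[ℂ] Dc := LinearMap.mkContinuous eL 1 eLnorm
  have he : ∀ x : D, ‖x‖ ≤ (1 : ℝ≥0) * ‖e x‖ := fun x => by
    simp only [NNReal.coe_one, one_mul]; rfl
  have h_dense : DenseRange e := by
    rw [DenseRange, Subtype.dense_iff]
    have hsub : (D : Set X) ⊆ Subtype.val '' Set.range e := fun x hx =>
      ⟨e ⟨x, hx⟩, ⟨⟨x, hx⟩, rfl⟩, rfl⟩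
    calc (Dc : Set X) = closure (D : Set X) := Submodule.topologicalClosure_coe D
      _ ⊆ closure (Subtype.val '' Set.range e) := closure_mono hsub
  let u₀ : Dc →L[ℂ] Y :=
    gc.extend e
  have hu₀ : ‖u₀‖ ≤ 1 := by
    have h1 := gc.opNorm_extend_le h_dense he
    calc ‖u₀‖ ≤ (1 : ℝ≥0) * ‖gc‖ := h1
    _ ≤ 1 := by simpa using hgc
  have u₀e : ∀ x : D, u₀ (e x) = gc x := fun x => gc.extend_eq h_dense (isUniformEmbedding_of_bound e he).isUniformInducing x
  refine ⟨u₀ ∘L (Submodule.orthogonalProjectionOnto Dc), ?_, ?_, ?_⟩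
  · calc ‖u₀ ∘L (Submodule.orthogonalProjectionOnto Dc)‖ ≤ ‖u₀‖ * ‖(Submodule.orthogonalProjectionOnto Dc : X →L[ℂ] Dc)‖ :=
        opNorm_comp_le _ _
    _ ≤ 1 * 1 := mul_le_mul hu₀ (Submodule.orthogonalProjectionOnto_norm_le _)
        (norm_nonneg (Submodule.orthogonalProjectionOnto Dc : X →L[ℂ] Dc)) zero_le_one
    _ = 1 := one_mul 1
  · ext ξ
    have hmem : d ξ ∈ Dc := D.le_topologicalClosure (LinearMap.mem_range_self _ ξ)
    have hP : Submodule.orthogonalProjectionOnto Dc (d ξ) = ⟨d ξ, hmem⟩ :=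
      Submodule.orthogonalProjectionOnto_mem_subspace_eq_self (⟨d ξ, hmem⟩ : Dc)
    have hee : (⟨d ξ, hmem⟩ : Dc) = e ⟨d ξ, LinearMap.mem_range_self _ ξ⟩ := rfl
    simp only [comp_apply, hP, hee, u₀e]
    exact (gkey ⟨d ξ, LinearMap.mem_range_self _ ξ⟩ ξ rfl).symm
  · intro ζ hζ
    have hz : ∀ y ∈ Dc, ⟪y, ζ⟫_ℂ = 0 := by
      have hsub : (D : Set X) ⊆ {y : X | ⟪y, ζ⟫_ℂ = 0} := fun z hzz =>
        (Submodule.mem_orthogonal D ζ).1 hζ z hzz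
      have hclosed : IsClosed {y : X | ⟪y, ζ⟫_ℂ = 0} :=
        isClosed_eq (Continuous.inner continuous_id continuous_const) continuous_const
      intro y hy
      have hDcsub : (Dc : Set X) ⊆ {y : X | ⟪y, ζ⟫_ℂ = 0} := by
        rw [hDc, Submodule.topologicalClosure_coe]
        exact closure_minimal hsub hclosed
      exact hDcsub hy
    have hmem : ζ ∈ Dcᗮ := (Submodule.mem_orthogonal Dc ζ).2 hz
    show u₀ (Submodule.orthogonalProjectionOnto Dc ζ) = 0
    rw [Submodule.orthogonalProjectionOnto_apply_of_mem_orthogonal hmem, map_zero]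

/-- Existence of positive square roots of positive operators. -/
lemma aux_exists_sqrt {X : Type*}
    [NormedAddCommGroup X] [InnerProductSpace ℂ X] [CompleteSpace X]
    (a : X →L[ℂ] X) (ha : a.IsPositive) :
    ∃ s : X →L[ℂ] X, s.IsPositive ∧ s ∘L s = a := by
  refine ⟨CFC.sqrt a, ?_, ?_⟩
  · rw [← ContinuousLinearMap.nonneg_iff_isPositive]; exact CFC.sqrt_nonneg (a := a)
  · have h := CFC.sq_sqrt a (ha := (ContinuousLinearMap.nonneg_iff_isPositive a).2 ha)
    rw [sq] at h
    exact h

lemma aux_sa_inner_left {X : Type*}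
    [NormedAddCommGroup X] [InnerProductSpace ℂ X] [CompleteSpace X]
    (s : X →L[ℂ] X) (hs : IsSelfAdjoint s) (u v : X) :
    ⟪s u, v⟫_ℂ = ⟪u, s v⟫_ℂ := by
  have h := ContinuousLinearMap.adjoint_inner_left s v u
  rwa [hs.adjoint_eq] at h

lemma aux_sq_inner {X : Type*}
    [NormedAddCommGroup X] [InnerProductSpace ℂ X] [CompleteSpace X]
    (s : X →L[ℂ] X) (hs : IsSelfAdjoint s) (u : X) :
    ⟪s (s u), u⟫_ℂ = ((‖s u‖ : ℂ)) ^ 2 := by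
  rw [aux_sa_inner_left s hs (s u) u, inner_self_eq_norm_sq_to_K]; norm_cast

lemma blockW_fst (a : E →L[ℂ] E) (b' : F →L[ℂ] E) (b : E →L[ℂ] F) (c : F →L[ℂ] F)
    (x : WithLp 2 (E × F)) :
    (blockW E F a b' b c x).fst = a x.fst + b' x.snd := by
  show a x.fst + b' x.snd + 0 + 0 = _
  simp

lemma blockW_snd (a : E →L[ℂ] E) (b' : F →L[ℂ] E) (b : E →L[ℂ] F) (c : F →L[ℂ] F)
    (x : WithLp 2 (E × F)) :
    (blockW E F a b' b c x).snd = b x.fst + c x.snd := by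
  show 0 + 0 + b x.fst + c x.snd = _
  simp

lemma blockW_inner (a : E →L[ℂ] E) (b' : F →L[ℂ] E) (b : E →L[ℂ] F) (c : F →L[ℂ] F)
    (x : WithLp 2 (E × F)) :
    ⟪blockW E F a b' b c x, x⟫_ℂ =
      ⟪a x.fst, x.fst⟫_ℂ + ⟪b' x.snd, x.fst⟫_ℂ + ⟪b x.fst, x.snd⟫_ℂ + ⟪c x.snd, x.snd⟫_ℂ := by
  rw [WithLp.prod_inner_apply, WithLp.ofLp_fst, WithLp.ofLp_snd, WithLp.ofLp_fst, WithLp.ofLp_snd, blockW_fst, blockW_snd, inner_add_left, inner_add_left]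
  ring

lemma pairW_fst (ξ : E) (η : F) :
    ((WithLp.prodContinuousLinearEquiv 2 ℂ E F).symm (ξ, η)).fst = ξ := rfl

lemma pairW_snd (ξ : E) (η : F) :
    ((WithLp.prodContinuousLinearEquiv 2 ℂ E F).symm (ξ, η)).snd = η := rfl

/-- From the quadratic form inequality, the Cauchy–Schwarz-type estimate. -/
lemma aux_keyineq (b : E →L[ℂ] F) (sa : E →L[ℂ] E) (sc : F →L[ℂ] F)
    (hQ : ∀ (ξ : E) (η : F), 0 ≤ ‖sa ξ‖ ^ 2 + 2 * (⟪η, b ξ⟫_ℂ).re + ‖sc η‖ ^ 2) :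
    ∀ (ξ : E) (η : F), ‖⟪η, b ξ⟫_ℂ‖ ≤ ‖sa ξ‖ * ‖sc η‖ := by
  intro ξ η
  rcases eq_or_ne (⟪η, b ξ⟫_ℂ) 0 with hz | hz
  · rw [hz, norm_zero]; positivity
  · set z := ⟪η, b ξ⟫_ℂ with hzdef
    have hzn : (0 : ℝ) < ‖z‖ := norm_pos_iff.2 hz
    have hquad : ∀ t : ℝ, 0 ≤ ‖sc η‖ ^ 2 * (t * t) + -(2 * ‖z‖) * t + ‖sa ξ‖ ^ 2 := by
      intro t
      set cc : ℂ := -(t : ℂ) * (z / (‖z‖ : ℂ)) with hcc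
      have h0 := hQ ξ (cc • η)
      have hinner : ⟪cc • η, b ξ⟫_ℂ = ((-(t * ‖z‖) : ℝ) : ℂ) := by
        rw [inner_smul_left, ← hzdef, hcc]
        rw [map_mul, map_neg, Complex.conj_ofReal, map_div₀, Complex.conj_ofReal]
        have hmc : (starRingEnd ℂ) z * z = ((‖z‖ ^ 2 : ℝ) : ℂ) := by
          rw [mul_comm, Complex.mul_conj, Complex.normSq_eq_norm_sq]
        field_simp
        rw [mul_assoc, hmc]
        push_cast
        ring
      have hnorm : ‖sc (cc • η)‖ ^ 2 = t ^ 2 * ‖sc η‖ ^ 2 := by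
        rw [map_smul, norm_smul]
        have hcnorm : ‖cc‖ = |t| := by
          rw [hcc, norm_mul, norm_neg, Complex.norm_real, norm_div, Complex.norm_real,
            norm_norm, Real.norm_eq_abs, div_self hzn.ne', mul_one]
        rw [hcnorm, mul_pow, sq_abs]
      rw [hinner, hnorm] at h0
      simp only [Complex.ofReal_re] at h0
      nlinarith
    have hd := discrim_le_zero hquad
    rw [discrim] at hd
    nlinarith [norm_nonneg (sa ξ), norm_nonneg (sc η), norm_nonneg z,
      mul_nonneg (norm_nonneg (sa ξ)) (norm_nonneg (sc η))]

/-- A `2 × 2` block operator `[[a, b*], [b, c]]` on `H ⊕ K`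
with `a ∈ B(H)`, `c ∈ B(K)` positive and `b ∈ B(H, K)` is positive if and
only if `b = c^{1/2} v a^{1/2}` for some contraction `v ∈ B(H, K)`.
(The square roots `a^{1/2}`, `c^{1/2}` are expressed via their defining
property of being positive operators squaring to `a` resp. `c`.) -/
theorem stmt11 {H K : Type*}
    [NormedAddCommGroup H] [InnerProductSpace ℂ H] [CompleteSpace H]
    [NormedAddCommGroup K] [InnerProductSpace ℂ K] [CompleteSpace K]
    (a : H →L[ℂ] H) (b : H →L[ℂ] K) (c : K →L[ℂ] K)
    (ha : a.IsPositive) (hc : c.IsPositive) :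
    (blockW H K a (ContinuousLinearMap.adjoint b) b c).IsPositive ↔
      ∃ (sa : H →L[ℂ] H) (sc : K →L[ℂ] K) (v : H →L[ℂ] K),
        sa.IsPositive ∧ sa ∘L sa = a ∧
        sc.IsPositive ∧ sc ∘L sc = c ∧
        ‖v‖ ≤ 1 ∧ b = sc ∘L v ∘L sa := by
  constructor
  · -- forward direction
    intro hM
    obtain ⟨sa, hsa, hsa2⟩ := aux_exists_sqrt a ha
    obtain ⟨sc, hsc, hsc2⟩ := aux_exists_sqrt c hc
    -- the quadratic form inequality
    have hQ : ∀ (ξ : H) (η : K), 0 ≤ ‖sa ξ‖ ^ 2 + 2 * (⟪η, b ξ⟫_ℂ).re + ‖sc η‖ ^ 2 := by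
      intro ξ η
      set x : WithLp 2 (H × K) := (WithLp.prodContinuousLinearEquiv 2 ℂ H K).symm (ξ, η) with hx
      have h0 := hM.inner_nonneg_left x
      rw [blockW_inner, pairW_fst, pairW_snd] at h0
      rw [← hsa2, ← hsc2, comp_apply, comp_apply, aux_sq_inner sa hsa.isSelfAdjoint,
        aux_sq_inner sc hsc.isSelfAdjoint, ContinuousLinearMap.adjoint_inner_left] at h0
      have hconj : ⟪b ξ, η⟫_ℂ = (starRingEnd ℂ) ⟪η, b ξ⟫_ℂ := (inner_conj_symm _ _).symm
      rw [hconj] at h0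
      replace h0 := (Complex.le_def.1 h0).1
      simp only [Complex.zero_re, Complex.add_re, Complex.conj_re] at h0
      have h1 : ((((‖sa ξ‖ : ℂ)) ^ 2).re) = ‖sa ξ‖ ^ 2 := by norm_cast
      have h2 : ((((‖sc η‖ : ℂ)) ^ 2).re) = ‖sc η‖ ^ 2 := by norm_cast
      rw [h1, h2] at h0
      linarith
    have keyineq := aux_keyineq b sa sc hQ
    -- first application of Douglas: b = w ∘ sa
    set r : ℝ := ‖sc‖ + 1 with hr
    have hrpos : (0 : ℝ) < r := by positivity
    have hb1 : ∀ ξ, ‖b ξ‖ ≤ ‖(((r : ℂ)) • sa) ξ‖ := by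
      intro ξ
      have h1 := keyineq ξ (b ξ)
      have h2 : ‖⟪b ξ, b ξ⟫_ℂ‖ = ‖b ξ‖ ^ 2 := by
        rw [inner_self_eq_norm_sq_to_K, norm_pow, RCLike.norm_ofReal, sq_abs]
      rw [h2] at h1
      have h3 : ‖sc (b ξ)‖ ≤ ‖sc‖ * ‖b ξ‖ := le_opNorm sc (b ξ)
      have h4 : ‖((r : ℂ) • sa) ξ‖ = r * ‖sa ξ‖ := by
        rw [smul_apply, norm_smul, Complex.norm_real, Real.norm_eq_abs, abs_of_pos hrpos]
      rw [h4]
      rcases eq_or_lt_of_le (norm_nonneg (b ξ)) with h0 | h0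
      · rw [← h0]; positivity
      · have h5 : ‖b ξ‖ * ‖b ξ‖ ≤ (‖sc‖ * ‖sa ξ‖) * ‖b ξ‖ := by
          nlinarith [mul_le_mul_of_nonneg_left h3 (norm_nonneg (sa ξ))]
        have h6 : ‖b ξ‖ ≤ ‖sc‖ * ‖sa ξ‖ := le_of_mul_le_mul_right h5 h0
        nlinarith [norm_nonneg (sa ξ)]
    obtain ⟨u1, -, hu1comp, hu1zero⟩ := aux_douglas b ((r : ℂ) • sa) hb1
    set w : H →L[ℂ] K := (r : ℂ) • u1 with hw
    have hwsa : ∀ ξ, w (sa ξ) = b ξ := by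
      intro ξ
      have h1 : u1 (((r : ℂ) • sa) ξ) = b ξ := by rw [← comp_apply, hu1comp]
      rw [smul_apply, map_smul] at h1
      show ((r : ℂ) • u1) (sa ξ) = b ξ
      rw [smul_apply]
      exact h1
    have hwzero : ∀ ζ ∈ (LinearMap.range (sa : H →ₗ[ℂ] H) : Submodule ℂ H)ᗮ, w ζ = 0 := by
      intro ζ hζ
      have hζ' : ζ ∈ (LinearMap.range (((r : ℂ) • sa : H →L[ℂ] H) : H →ₗ[ℂ] H) : Submodule ℂ H)ᗮ := by
        rw [Submodule.mem_orthogonal]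
        intro y hy
        obtain ⟨ξ, rfl⟩ := hy
        have hmem : ((r : ℂ) • sa) ξ ∈ LinearMap.range (sa : H →ₗ[ℂ] H) := by
          rw [smul_apply, ← map_smul]
          exact LinearMap.mem_range_self _ _
        exact (Submodule.mem_orthogonal _ ζ).1 hζ _ hmem
      show ((r : ℂ) • u1) ζ = 0
      rw [smul_apply, hu1zero ζ hζ', smul_zero]
    -- bound for adjoint of w
    have hadj : ∀ η, ‖(ContinuousLinearMap.adjoint w) η‖ ≤ ‖sc η‖ := by
      intro η
      set m := (ContinuousLinearMap.adjoint w) η with hm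
      have hmem : m ∈ ((LinearMap.range (sa : H →ₗ[ℂ] H) : Submodule ℂ H)ᗮ)ᗮ := by
        rw [Submodule.mem_orthogonal]
        intro ζ hζ
        have h1 : ⟪m, ζ⟫_ℂ = 0 := by
          rw [hm, ContinuousLinearMap.adjoint_inner_left, hwzero ζ hζ, inner_zero_right]
        rw [← inner_conj_symm, h1, map_zero]
      rw [Submodule.orthogonal_orthogonal_eq_closure] at hmem
      have hmem' : m ∈ closure ((LinearMap.range (sa : H →ₗ[ℂ] H) : Submodule ℂ H) : Set H) := by
        rw [← Submodule.topologicalClosure_coe]; exact hmem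
      have hclosed : IsClosed {ζ : H | ‖⟪m, ζ⟫_ℂ‖ ≤ ‖sc η‖ * ‖ζ‖} :=
        isClosed_le (Continuous.norm (Continuous.inner continuous_const continuous_id))
          (continuous_const.mul continuous_norm)
      have hsub : ((LinearMap.range (sa : H →ₗ[ℂ] H) : Submodule ℂ H) : Set H) ⊆
          {ζ : H | ‖⟪m, ζ⟫_ℂ‖ ≤ ‖sc η‖ * ‖ζ‖} := by
        intro ζ hζ
        rw [SetLike.mem_coe, LinearMap.mem_range] at hζ
        obtain ⟨ξ, rfl⟩ := hζ
        show ‖⟪m, sa ξ⟫_ℂ‖ ≤ ‖sc η‖ * ‖sa ξ‖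
        have h1 : ⟪m, sa ξ⟫_ℂ = ⟪η, b ξ⟫_ℂ := by
          rw [hm, ContinuousLinearMap.adjoint_inner_left, hwsa]
        rw [h1]
        calc ‖⟪η, b ξ⟫_ℂ‖ ≤ ‖sa ξ‖ * ‖sc η‖ := keyineq ξ η
          _ = ‖sc η‖ * ‖sa ξ‖ := mul_comm _ _
      have hm4 := closure_minimal hsub hclosed hmem'
      have hm5 : ‖⟪m, m⟫_ℂ‖ ≤ ‖sc η‖ * ‖m‖ := hm4
      rw [inner_self_eq_norm_sq_to_K, norm_pow, RCLike.norm_ofReal, sq_abs] at hm5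
      rcases eq_or_lt_of_le (norm_nonneg m) with h0 | h0
      · rw [← h0]; exact norm_nonneg _
      · nlinarith
    -- second application of Douglas
    obtain ⟨u2, hu2norm, hu2comp, -⟩ := aux_douglas (ContinuousLinearMap.adjoint w) sc hadj
    refine ⟨sa, sc, ContinuousLinearMap.adjoint u2, hsa, hsa2, hsc, hsc2, ?_, ?_⟩
    · rw [LinearIsometryEquiv.norm_map ContinuousLinearMap.adjoint u2]
      exact hu2norm
    · have h1 : w = sc ∘L ContinuousLinearMap.adjoint u2 := by
        have h2 := congrArg ContinuousLinearMap.adjoint hu2comp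
        rw [ContinuousLinearMap.adjoint_comp, ContinuousLinearMap.adjoint_adjoint,
          hsc.isSelfAdjoint.adjoint_eq] at h2
        exact h2.symm
      ext ξ
      rw [← hwsa ξ, h1]
      simp only [comp_apply]
  · -- backward direction
    rintro ⟨sa, sc, v, hsa, hsa2, hsc, hsc2, hv, hb⟩
    subst hb
    rw [ContinuousLinearMap.isPositive_iff_complex]
    intro x
    rw [blockW_inner, ← hsa2, ← hsc2, ContinuousLinearMap.adjoint_inner_left]
    simp only [comp_apply]
    rw [aux_sq_inner sa hsa.isSelfAdjoint, aux_sq_inner sc hsc.isSelfAdjoint]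
    set z := ⟪sc (v (sa x.fst)), x.snd⟫_ℂ with hz
    have hconj : ⟪x.snd, sc (v (sa x.fst))⟫_ℂ = (starRingEnd ℂ) z := by
      rw [hz, inner_conj_symm]
    rw [hconj]
    have h1 : (starRingEnd ℂ) z + z = ((2 * z.re : ℝ) : ℂ) := by
      rw [add_comm, Complex.add_conj]
    have hre : ((‖sa x.fst‖ : ℂ)) ^ 2 + (starRingEnd ℂ) z + z + ((‖sc x.snd‖ : ℂ)) ^ 2
        = ((‖sa x.fst‖ ^ 2 + 2 * z.re + ‖sc x.snd‖ ^ 2 : ℝ) : ℂ) := by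
      rw [show ((‖sa x.fst‖ : ℂ)) ^ 2 + (starRingEnd ℂ) z + z + ((‖sc x.snd‖ : ℂ)) ^ 2
          = ((‖sa x.fst‖ : ℂ)) ^ 2 + ((starRingEnd ℂ) z + z) + ((‖sc x.snd‖ : ℂ)) ^ 2
        from by ring, h1]
      push_cast
      ring
    rw [hre]
    have hz2 : z = ⟪v (sa x.fst), sc x.snd⟫_ℂ := by
      rw [hz, aux_sa_inner_left sc hsc.isSelfAdjoint (v (sa x.fst)) x.snd]
    have h3 : ‖z‖ ≤ ‖sa x.fst‖ * ‖sc x.snd‖ := by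
      rw [hz2]
      calc ‖⟪v (sa x.fst), sc x.snd⟫_ℂ‖ ≤ ‖v (sa x.fst)‖ * ‖sc x.snd‖ :=
            norm_inner_le_norm _ _
        _ ≤ (‖v‖ * ‖sa x.fst‖) * ‖sc x.snd‖ :=
            mul_le_mul_of_nonneg_right (v.le_opNorm _) (norm_nonneg _)
        _ ≤ (1 * ‖sa x.fst‖) * ‖sc x.snd‖ := by
            have := mul_le_mul_of_nonneg_right hv (norm_nonneg (sa x.fst))
            exact mul_le_mul_of_nonneg_right this (norm_nonneg _)
        _ = ‖sa x.fst‖ * ‖sc x.snd‖ := by ring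
    have h4 : |z.re| ≤ ‖z‖ := by
      exact Complex.abs_re_le_norm z
    constructor
    · simp only [RCLike.re_to_complex, Complex.ofReal_re]
    · simp only [RCLike.re_to_complex, Complex.ofReal_re]
      nlinarith [sq_nonneg (‖sa x.fst‖ - ‖sc x.snd‖), abs_le.1 h4, norm_nonneg z]

end
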